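/- arXiv:2207.05585 — 5 statements merged into one kernel-verified Lean document; each statement's English description precedes it below -/
import Mathlib

section
/- Let r ≥ 5 and p > 3 be primes, let d be an odd positive integer, and let a, b, c be integers with gcd(a,b) = 1 and a^r + b^r = d c^p. If 2 divides a+b, then the 2-adic valuation of a+b equals p times the 2-adic valuation of c; in particular v₂(a+b) ≥ p ≥ 5, so 8 divides a+b. -/
/-- Let `r ≥ 5` and `p > 3` be primes, `d` an odd positive integer, and `a, b, c`
integers with `gcd(a,b) = 1` and `a^r + b^r = d c^p`. If `2 ∣ a + b`, then
`v₂(a+b) = p · v₂(c)`; in particular `v₂(a+b) ≥ p ≥ 5`, so `8 ∣ a + b`. -/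
theorem stmt_9 (r p : ℕ) (hr : r.Prime) (hr5 : 5 ≤ r) (hp : p.Prime) (hp3 : 3 < p)
    (d : ℕ) (hd0 : 0 < d) (hdodd : Odd d)
    (a b c : ℤ) (hab : IsCoprime a b) (heq : a ^ r + b ^ r = (d : ℤ) * c ^ p)
    (h2 : (2 : ℤ) ∣ a + b) :
    emultiplicity (2 : ℤ) (a + b) = (p : ℕ∞) * emultiplicity (2 : ℤ) c ∧
      (p : ℕ∞) ≤ emultiplicity (2 : ℤ) (a + b) ∧ (8 : ℤ) ∣ a + b := by
  have hrodd : Odd r := hr.odd_of_ne_two (by omega)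
  -- a and b are odd
  have hao : Odd a := by
    rcases Int.even_or_odd a with ha | ha
    · exfalso
      have hb : Even b := by
        rcases Int.even_or_odd b with hb | hb
        · exact hb
        · exact absurd (by simpa using ha.add_odd hb) (by
            intro h; exact (Int.not_odd_iff_even.mpr (by
              rcases h2 with ⟨k, hk⟩; exact ⟨k, by linarith⟩)) h)
      exact (Int.prime_two.not_unit) (hab.isUnit_of_dvd' ha.two_dvd hb.two_dvd)
    · exact ha
  have hbo : Odd b := by
    rcases Int.even_or_odd b with hb | hb
    · exfalso
      rcases h2 with ⟨k, hk⟩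
      have : Even a := by
        have : Even (a + b) := ⟨k, by linarith⟩
        simpa using this.sub hb
      exact (Int.not_odd_iff_even.mpr this) hao
    · exact hb
  -- factor a^r + b^r = S * (a + b) with S odd
  set S : ℤ := ∑ i ∈ Finset.range r, a ^ i * (-b) ^ (r - 1 - i) with hS
  have hfac : a ^ r + b ^ r = S * (a + b) := by
    have := geom_sum₂_mul a (-b) r
    rw [hrodd.neg_pow] at this
    rw [← hS] at this
    linarith [this]
  have hSodd : ¬ (2 : ℤ) ∣ S := by
    rw [Int.two_dvd_ne_zero, hS]
    rw [Finset.sum_int_mod]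
    have : (∑ i ∈ Finset.range r, a ^ i * (-b) ^ (r - 1 - i) % 2)
        = ∑ i ∈ Finset.range r, (1 : ℤ) := by
      refine Finset.sum_congr rfl fun i hi => ?_
      exact Int.odd_iff.mp ((hao.pow).mul (hbo.neg.pow))
    rw [this]
    simp only [Finset.sum_const, Finset.card_range, nsmul_eq_mul, mul_one]
    exact Int.odd_iff.mp (by exact_mod_cast hrodd)
  have hSmul0 : emultiplicity (2 : ℤ) S = 0 := emultiplicity_eq_zero.mpr hSodd
  have hd2 : ¬ (2 : ℤ) ∣ (d : ℤ) := by
    rw [Int.two_dvd_ne_zero]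
    exact Int.odd_iff.mp (by exact_mod_cast hdodd)
  have hdmul0 : emultiplicity (2 : ℤ) (d : ℤ) = 0 := emultiplicity_eq_zero.mpr hd2
  have key : emultiplicity (2 : ℤ) (a + b) = (p : ℕ∞) * emultiplicity (2 : ℤ) c := by
    have h1 : emultiplicity (2 : ℤ) (S * (a + b))
        = emultiplicity (2 : ℤ) ((d : ℤ) * c ^ p) := by rw [← hfac, heq]
    rw [emultiplicity_mul Int.prime_two, emultiplicity_mul Int.prime_two,
      emultiplicity_pow Int.prime_two, hSmul0, hdmul0, zero_add, zero_add] at h1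
    exact h1
  refine ⟨key, ?_, ?_⟩
  · -- p ≤ v₂(a+b)
    have h1le : (1 : ℕ∞) ≤ emultiplicity (2 : ℤ) (a + b) := by
      simpa using le_emultiplicity_of_pow_dvd (by simpa using h2 :
        (2 : ℤ) ^ 1 ∣ a + b)
    rw [key] at h1le ⊢
    rcases eq_or_ne (emultiplicity (2 : ℤ) c) 0 with hc0 | hc0
    · rw [hc0, mul_zero] at h1le; exact absurd h1le (by simp)
    · have : (1 : ℕ∞) ≤ emultiplicity (2 : ℤ) c := ENat.one_le_iff_ne_zero.mpr hc0
      calc (p : ℕ∞) = (p : ℕ∞) * 1 := (mul_one _).symm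
        _ ≤ (p : ℕ∞) * emultiplicity (2 : ℤ) c := mul_le_mul_right this _
  · -- 8 ∣ a + b
    have h1le : (1 : ℕ∞) ≤ emultiplicity (2 : ℤ) (a + b) := by
      simpa using le_emultiplicity_of_pow_dvd (by simpa using h2 :
        (2 : ℤ) ^ 1 ∣ a + b)
    have hple : (p : ℕ∞) ≤ emultiplicity (2 : ℤ) (a + b) := by
      rw [key] at h1le ⊢
      rcases eq_or_ne (emultiplicity (2 : ℤ) c) 0 with hc0 | hc0
      · rw [hc0, mul_zero] at h1le; exact absurd h1le (by simp)
      · have : (1 : ℕ∞) ≤ emultiplicity (2 : ℤ) c := ENat.one_le_iff_ne_zero.mpr hc0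
        calc (p : ℕ∞) = (p : ℕ∞) * 1 := (mul_one _).symm
          _ ≤ (p : ℕ∞) * emultiplicity (2 : ℤ) c := mul_le_mul_right this _
    have h3le : ((3 : ℕ) : ℕ∞) ≤ emultiplicity (2 : ℤ) (a + b) := by
      refine le_trans ?_ hple
      exact Nat.cast_le.mpr (by omega)
    have := pow_dvd_of_le_emultiplicity h3le
    norm_num at this
    exact this
end

section
/- Let r ≥ 5 be a prime and let ζ be a primitive r-th root of unity in the cyclotomic field ℚ(ζ_r). Let a, b be coprime integers with a ≡ −b (mod 4). Then for every prime ideal q of ℤ[ζ] lying above 2, the image of B_{a,b} = β f₁(a,b) in ℤ[ζ]/q² is a square; explicitly, writing z = −ζ − ζ⁻¹, one has B_{a,b} ≡ ( b(z+2)(ζ^{(r+1)/2} + ζ^{−(r+1)/2}) )² (mod q²). -/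
open NumberField

/-- Let `r ≥ 5` be a prime and `ζ` a primitive `r`-th root of unity in the ring of
integers `ℤ[ζ]` of `ℚ(ζ_r)`. Let `a, b` be coprime integers with `a ≡ −b (mod 4)`.
Then for every prime ideal `q` of `ℤ[ζ]` lying above `2`, the image of
`B_{a,b} = β f₁(a,b)` in `ℤ[ζ]/q²` is a square; explicitly, with `z = −ζ − ζ⁻¹`,
`B_{a,b} ≡ (b(z+2)(ζ^{(r+1)/2} + ζ^{−(r+1)/2}))² (mod q²)`
(here `ζ⁻¹ = ζ^{r−1}`, `ζ⁻² = ζ^{r−2}`, `ζ^{−(r+1)/2} = ζ^{(r−1)/2}` in `ℤ[ζ]`). -/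
theorem stmt_12 (r : ℕ) (hr : r.Prime) (hr5 : 5 ≤ r)
    (K : Type*) [Field K] [CharZero K]
    [IsCyclotomicExtension {r} ℚ K]
    (ζ : 𝓞 K) (hζ : IsPrimitiveRoot ζ r)
    (a b : ℤ) (hab : IsCoprime a b) (h4 : a ≡ -b [ZMOD 4])
    (q : Ideal (𝓞 K)) (hq : q.IsPrime) (hq2 : (2 : 𝓞 K) ∈ q) :
    (∃ s : 𝓞 K,
      (1 - ζ) * (1 - ζ ^ (r - 1)) *
          ((a : 𝓞 K) ^ 2 + (ζ ^ 2 + ζ ^ (r - 2)) * (a : 𝓞 K) * (b : 𝓞 K) +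
            (b : 𝓞 K) ^ 2) - s ^ 2 ∈ q ^ 2) ∧
    (1 - ζ) * (1 - ζ ^ (r - 1)) *
        ((a : 𝓞 K) ^ 2 + (ζ ^ 2 + ζ ^ (r - 2)) * (a : 𝓞 K) * (b : 𝓞 K) +
          (b : 𝓞 K) ^ 2) -
      ((b : 𝓞 K) * ((-ζ - ζ ^ (r - 1)) + 2) *
        (ζ ^ ((r + 1) / 2) + ζ ^ ((r - 1) / 2))) ^ 2 ∈ q ^ 2 := by

  obtain ⟨n, hn⟩ : ∃ n, r = 2 * n + 3 := by
    obtain ⟨m, hm⟩ := hr.odd_of_ne_two (by omega)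
    exact ⟨m - 1, by omega⟩
  have hone : ζ ^ (2 * n + 3) = 1 := by rw [← hn]; exact hζ.pow_eq_one
  have e1 : r - 1 = 2 * n + 2 := by omega
  have e2 : r - 2 = 2 * n + 1 := by omega
  have e3 : (r + 1) / 2 = n + 2 := by omega
  have e4 : (r - 1) / 2 = n + 1 := by omega
  rw [e3, e4, e1, e2]
  obtain ⟨k, hk⟩ : (4 : ℤ) ∣ a + b := by
    have := h4.dvd
    omega
  have hcast : (a : 𝓞 K) + (b : 𝓞 K) = 4 * (k : 𝓞 K) := by
    have := congrArg (fun t : ℤ => (t : 𝓞 K)) hk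
    push_cast at this
    exact this
  have key :
      (1 - ζ) * (1 - ζ ^ (2 * n + 2)) *
          ((a : 𝓞 K) ^ 2 + (ζ ^ 2 + ζ ^ (2 * n + 1)) * (a : 𝓞 K) * (b : 𝓞 K) +
            (b : 𝓞 K) ^ 2) -
        ((b : 𝓞 K) * ((-ζ - ζ ^ (2 * n + 2)) + 2) *
          (ζ ^ (n + 2) + ζ ^ (n + 1))) ^ 2 =
      2 * (2 * ((k : 𝓞 K) *
        ((1 - ζ) * (1 - ζ ^ (2 * n + 2)) *
          ((a : 𝓞 K) - (b : 𝓞 K) + (ζ ^ 2 + ζ ^ (2 * n + 1)) * (b : 𝓞 K))))) := by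
    linear_combination
      (b : 𝓞 K) ^ 2 * (-2 - ζ ^ 3 + ζ ^ 2 + 2 * ζ - 2 * ζ ^ (2 * n + 4)
        + 5 * ζ ^ (2 * n + 2) - ζ ^ (4 * n + 5) - 2 * ζ ^ (4 * n + 4)
        - ζ ^ (4 * n + 3) + ζ ^ (2 * n + 1)) * hone +
      ((1 - ζ) * (1 - ζ ^ (2 * n + 2)) *
        ((a : 𝓞 K) - (b : 𝓞 K) + (ζ ^ 2 + ζ ^ (2 * n + 1)) * (b : 𝓞 K))) * hcast
  have hmem :
      (1 - ζ) * (1 - ζ ^ (2 * n + 2)) *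
          ((a : 𝓞 K) ^ 2 + (ζ ^ 2 + ζ ^ (2 * n + 1)) * (a : 𝓞 K) * (b : 𝓞 K) +
            (b : 𝓞 K) ^ 2) -
        ((b : 𝓞 K) * ((-ζ - ζ ^ (2 * n + 2)) + 2) *
          (ζ ^ (n + 2) + ζ ^ (n + 1))) ^ 2 ∈ q ^ 2 := by
    rw [key, pow_two]
    exact Ideal.mul_mem_mul hq2 (Ideal.mul_mem_right _ q hq2)
  exact ⟨⟨_, hmem⟩, hmem⟩
end

section
/- Let r ≥ 5 be a prime, let ζ be a primitive r-th root of unity in ℚ(ζ_r), and let λ = (1−ζ) be the prime ideal of ℤ[ζ] above r, with associated valuation v_λ (normalized so v_λ(1−ζ) = 1, hence v_λ(r) = r−1). Let a, b be coprime integers with r dividing a+b, and let F_{a,b} be the elliptic curve Y² = X(X − A_{a,b})(X + B_{a,b}). Then v_λ(c₄(F_{a,b})) = 8, v_λ(c₆(F_{a,b})) = 12, and v_λ(Δ(F_{a,b})) = 20 + 4(r−1)·v_r(a+b), where v_r(a+b) is the r-adic valuation of the integer a+b. (These values are twice the valuations at the prime of the maximal real subfield ℚ(ζ_r)⁺ above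 r, since that prime ramifies in ℚ(ζ_r) with ramification index 2.) -/
open NumberField

/-- `α = ζ(1−ζ)(1−ζ⁻³)`, with `ζ⁻¹ = ζ^{r−1}` for `ζ` an `r`-th root of unity. -/
def freyAlpha {R : Type*} [CommRing R] (r : ℕ) (ζ : R) : R :=
  ζ * (1 - ζ) * (1 - ζ ^ (r - 3))

/-- `β = (1−ζ)(1−ζ⁻¹)`. -/
def freyBeta {R : Type*} [CommRing R] (r : ℕ) (ζ : R) : R :=
  (1 - ζ) * (1 - ζ ^ (r - 1))

/-- `γ = −(1−ζ²)(1−ζ⁻²)`. -/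
def freyGamma {R : Type*} [CommRing R] (r : ℕ) (ζ : R) : R :=
  -((1 - ζ ^ 2) * (1 - ζ ^ (r - 2)))

/-- `A_{a,b} = α(a+b)²`. -/
def freyA {R : Type*} [CommRing R] (r : ℕ) (ζ : R) (a b : ℤ) : R :=
  freyAlpha r ζ * ((a : R) + (b : R)) ^ 2

/-- `B_{a,b} = β f₁(a,b)` with `f₁(x,y) = x² + (ζ² + ζ⁻²)xy + y²`. -/
def freyB {R : Type*} [CommRing R] (r : ℕ) (ζ : R) (a b : ℤ) : R :=
  freyBeta r ζ * ((a : R) ^ 2 + (ζ ^ 2 + ζ ^ (r - 2)) * (a : R) * (b : R) + (b : R) ^ 2)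

/-- `C_{a,b} = γ f₂(a,b)` with `f₂(x,y) = x² + (ζ + ζ⁻¹)xy + y²`. -/
def freyC {R : Type*} [CommRing R] (r : ℕ) (ζ : R) (a b : ℤ) : R :=
  freyGamma r ζ * ((a : R) ^ 2 + (ζ + ζ ^ (r - 1)) * (a : R) * (b : R) + (b : R) ^ 2)

/-- `c₄ = 2⁴(A² + AB + B²)` for the Frey curve `Y² = X(X − A)(X + B)`. -/
def freyC4 {R : Type*} [CommRing R] (r : ℕ) (ζ : R) (a b : ℤ) : R :=
  2 ^ 4 * (freyA r ζ a b ^ 2 + freyA r ζ a b * freyB r ζ a b + freyB r ζ a b ^ 2)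

/-- `c₆ = 2⁵(2A³ + 3A²B − 3AB² − 2B³)`. -/
def freyC6 {R : Type*} [CommRing R] (r : ℕ) (ζ : R) (a b : ℤ) : R :=
  2 ^ 5 * (2 * freyA r ζ a b ^ 3 + 3 * freyA r ζ a b ^ 2 * freyB r ζ a b -
    3 * freyA r ζ a b * freyB r ζ a b ^ 2 - 2 * freyB r ζ a b ^ 3)

/-- `Δ = 2⁴(ABC)²`. -/
def freyDelta {R : Type*} [CommRing R] (r : ℕ) (ζ : R) (a b : ℤ) : R :=
  2 ^ 4 * (freyA r ζ a b * freyB r ζ a b * freyC r ζ a b) ^ 2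


section Helpers

variable {R : Type*} [CommRing R] [IsDomain R] {r : ℕ} {ζ : R}

lemma frey_assoc (hr : r.Prime) (hζ : IsPrimitiveRoot ζ r) {k : ℕ}
    (hk0 : 0 < k) (hkr : k < r) : Associated (1 - ζ) (1 - ζ ^ k) := by
  refine associated_of_dvd_dvd ?_ ?_
  · simpa using sub_dvd_pow_sub_pow (1 : R) ζ k
  · have hcop : Nat.Coprime k r :=
      ((hr.coprime_iff_not_dvd).mpr (Nat.not_dvd_of_pos_of_lt hk0 hkr)).symm
    obtain ⟨j, -, hj⟩ := Nat.exists_mul_mod_eq_one_of_coprime hcop hr.one_lt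
    have hpow : (ζ ^ k) ^ j = ζ := by
      rw [← pow_mul]
      conv_lhs => rw [← Nat.div_add_mod (k * j) r]
      rw [pow_add, pow_mul, hζ.pow_eq_one, one_pow, one_mul, hj, pow_one]
    have h := sub_dvd_pow_sub_pow (1 : R) (ζ ^ k) j
    rwa [one_pow, hpow] at h

lemma frey_v_one_sub_pow (hr : r.Prime) (hζ : IsPrimitiveRoot ζ r) (hπ : Prime (1 - ζ))
    {k : ℕ} (hk0 : 0 < k) (hkr : k < r) :
    emultiplicity (1 - ζ) (1 - ζ ^ k) = 1 := by
  have h1 : emultiplicity (1 - ζ) (1 - ζ) = 1 := by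
    simpa using emultiplicity_pow_self_of_prime hπ 1
  exact (emultiplicity_eq_of_associated_right (frey_assoc hr hζ hk0 hkr)).symm.trans h1

lemma frey_v_r (hr : r.Prime) (hζ : IsPrimitiveRoot ζ r) (hπ : Prime (1 - ζ)) :
    emultiplicity (1 - ζ) ((r : R)) = ((r - 1 : ℕ) : ℕ∞) := by
  obtain ⟨t, ht⟩ : ∃ t, r = t + 1 := ⟨r - 1, by have := hr.two_le; omega⟩
  subst ht
  have hprod := hζ.prod_one_sub_pow_eq_order
  calc emultiplicity (1 - ζ) ((t + 1 : ℕ) : R)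
      = emultiplicity (1 - ζ) (∏ k ∈ Finset.range t, (1 - ζ ^ (k + 1))) := by
        rw [hprod]; push_cast; ring_nf
    _ = ∑ k ∈ Finset.range t, emultiplicity (1 - ζ) (1 - ζ ^ (k + 1)) :=
        Finset.emultiplicity_prod hπ _ _
    _ = ∑ _k ∈ Finset.range t, (1 : ℕ∞) := by
        refine Finset.sum_congr rfl fun k hk => ?_
        exact frey_v_one_sub_pow hr hζ hπ (Nat.succ_pos k)
          (by simpa using Nat.succ_lt_succ (Finset.mem_range.mp hk))
    _ = ((t + 1 - 1 : ℕ) : ℕ∞) := by simp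

lemma frey_pi_dvd_r (hr : r.Prime) (hζ : IsPrimitiveRoot ζ r) (hπ : Prime (1 - ζ)) :
    (1 - ζ) ∣ (r : R) := by
  apply dvd_of_emultiplicity_pos
  rw [frey_v_r hr hζ hπ]
  have : r - 1 ≠ 0 := by have := hr.two_le; omega
  exact_mod_cast Nat.pos_of_ne_zero this

lemma frey_not_dvd_int (hr : r.Prime) (hζ : IsPrimitiveRoot ζ r) (hπ : Prime (1 - ζ))
    {c : ℤ} (hc : ¬(r : ℤ) ∣ c) : ¬(1 - ζ) ∣ ((c : ℤ) : R) := by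
  have hrZ : Prime ((r : ℕ) : ℤ) := Nat.prime_iff_prime_int.mp hr
  have hcop : IsCoprime ((r : ℕ) : ℤ) c := hrZ.irreducible.coprime_iff_not_dvd.mpr hc
  obtain ⟨u, v, huv⟩ := hcop
  intro hdvd
  apply hπ.not_unit
  apply isUnit_of_dvd_one
  have hcast : (u : R) * ((r : ℕ) : R) + (v : R) * (c : R) = 1 := by
    exact_mod_cast congrArg (fun z : ℤ => ((z : R))) huv
  have h1 : (1 - ζ) ∣ ((u : R) * ((r : ℕ) : R) + (v : R) * (c : R)) :=
    dvd_add (Dvd.dvd.mul_left (frey_pi_dvd_r hr hζ hπ) _) (Dvd.dvd.mul_left hdvd _)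
  rwa [hcast] at h1

lemma frey_v_int (hr : r.Prime) (hζ : IsPrimitiveRoot ζ r) (hπ : Prime (1 - ζ)) (n : ℤ) :
    emultiplicity (1 - ζ) ((n : R)) = ((r - 1 : ℕ) : ℕ∞) * emultiplicity ((r : ℕ) : ℤ) n := by
  rcases eq_or_ne n 0 with rfl | hn
  · rw [Int.cast_zero, emultiplicity_zero, emultiplicity_zero, ENat.mul_top]
    have : r - 1 ≠ 0 := by have := hr.two_le; omega
    exact_mod_cast this
  · have hfin : FiniteMultiplicity ((r : ℕ) : ℤ) n :=
      Int.finiteMultiplicity_iff.mpr ⟨by simpa using hr.ne_one, hn⟩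
    set k := multiplicity ((r : ℕ) : ℤ) n with hkdef
    have hk : emultiplicity ((r : ℕ) : ℤ) n = k := hfin.emultiplicity_eq_multiplicity
    obtain ⟨c, hc⟩ := pow_multiplicity_dvd ((r : ℕ) : ℤ) n
    have hrc : ¬((r : ℕ) : ℤ) ∣ c := by
      intro h
      obtain ⟨d, hd⟩ := h
      exact hfin.not_pow_dvd_of_multiplicity_lt (lt_add_one k)
        ⟨d, by rw [hc, hd]; ring⟩
    have hcast : (n : R) = ((r : ℕ) : R) ^ k * ((c : ℤ) : R) := by
      rw [hc]; push_cast; ring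
    rw [hcast, emultiplicity_mul hπ, emultiplicity_pow hπ, frey_v_r hr hζ hπ,
      emultiplicity_eq_zero.mpr (frey_not_dvd_int hr hζ hπ hrc), add_zero, hk, mul_comm]

end Helpers

/-- Let `r ≥ 5` be a prime, `ζ` a primitive `r`-th root of unity in the ring of
integers `ℤ[ζ]` of `ℚ(ζ_r)`, and `λ = (1−ζ)` the prime above `r`, with valuation
`v_λ` normalized by `v_λ(1−ζ) = 1`. Let `a, b` be coprime integers with `r ∣ a+b`.
Then `v_λ(c₄) = 8`, `v_λ(c₆) = 12` and `v_λ(Δ) = 20 + 4(r−1)·v_r(a+b)` for the Frey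
curve `Y² = X(X − A_{a,b})(X + B_{a,b})`. -/
theorem stmt_13 (r : ℕ) (hr : r.Prime) (hr5 : 5 ≤ r)
    (K : Type*) [Field K] [CharZero K]
    [IsCyclotomicExtension {r} ℚ K]
    (ζ : 𝓞 K) (hζ : IsPrimitiveRoot ζ r)
    (a b : ℤ) (hab : IsCoprime a b) (hrab : (r : ℤ) ∣ a + b) :
    emultiplicity (1 - ζ) (freyC4 r ζ a b) = 8 ∧
    emultiplicity (1 - ζ) (freyC6 r ζ a b) = 12 ∧
    emultiplicity (1 - ζ) (freyDelta r ζ a b) =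
      20 + ((4 * (r - 1) : ℕ) : ℕ∞) * emultiplicity (r : ℤ) (a + b) := by

  classical
  have hrpos : 0 < r := by omega
  have hζK : IsPrimitiveRoot (algebraMap (𝓞 K) K ζ) r :=
    hζ.map_of_injective NumberField.RingOfIntegers.coe_injective
  have hπ : Prime (1 - ζ) := by
    haveI : NeZero r := ⟨hrpos.ne'⟩
    have h := IsPrimitiveRoot.zeta_sub_one_prime' (p := r) (K := K) (hp := ⟨hr⟩) hζK
    have heq : hζK.toInteger = ζ := by ext; rfl
    rw [heq] at h
    have h2 := h.neg
    rwa [neg_sub] at h2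
  have hζ2 : ζ ^ 2 * ζ ^ (r - 2) = 1 := by
    rw [← pow_add, show 2 + (r - 2) = r by omega, hζ.pow_eq_one]
  have hζ1 : ζ * ζ ^ (r - 1) = 1 := by
    have h : ζ ^ ((r - 1) + 1) = 1 := by rw [show (r - 1) + 1 = r by omega, hζ.pow_eq_one]
    rwa [pow_succ'] at h
  have hvζ : emultiplicity (1 - ζ) ζ = 0 :=
    emultiplicity_eq_zero.mpr (fun hd => hπ.not_isUnit (isUnit_of_dvd_unit hd (hζ.isUnit hrpos.ne')))
  have hrZ : Prime ((r : ℕ) : ℤ) := Nat.prime_iff_prime_int.mp hr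
  have hra : ¬((r : ℕ) : ℤ) ∣ a := by
    intro h
    have hb : ((r : ℕ) : ℤ) ∣ b := by
      have := dvd_sub hrab h
      simpa using this
    exact hrZ.not_isUnit (hab.isUnit_of_dvd' h hb)
  have hva : emultiplicity (1 - ζ) ((a : 𝓞 K)) = 0 :=
    emultiplicity_eq_zero.mpr (frey_not_dvd_int hr hζ hπ hra)
  have hv2 : emultiplicity (1 - ζ) (2 : 𝓞 K) = 0 := by
    have h2 : ¬((r : ℕ) : ℤ) ∣ (2 : ℤ) := by
      intro h
      have := Int.le_of_dvd (by norm_num) h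
      omega
    have hnd := frey_not_dvd_int hr hζ hπ h2
    rw [show (((2 : ℤ)) : 𝓞 K) = (2 : 𝓞 K) by push_cast; ring] at hnd
    exact emultiplicity_eq_zero.mpr hnd
  have hv1 : emultiplicity (1 - ζ) (1 - ζ) = 1 := by
    have h := frey_v_one_sub_pow hr hζ hπ (k := 1) one_pos (by omega)
    simpa using h
  have hvk : ∀ k, 0 < k → k < r → emultiplicity (1 - ζ) (1 - ζ ^ k) = 1 :=
    fun k h1 h2 => frey_v_one_sub_pow hr hζ hπ h1 h2
  set M := emultiplicity ((r : ℕ) : ℤ) (a + b) with hMdef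
  set w := emultiplicity (1 - ζ) ((a : 𝓞 K) + (b : 𝓞 K)) with hwdef
  have hw : w = ((r - 1 : ℕ) : ℕ∞) * M := by
    rw [hwdef, hMdef]
    have h := frey_v_int hr hζ hπ (a + b)
    rwa [show (((a + b : ℤ)) : 𝓞 K) = (a : 𝓞 K) + (b : 𝓞 K) by push_cast; ring] at h
  have hM1 : 1 ≤ M := by
    have hpos : 0 < M := emultiplicity_pos_of_dvd (by exact_mod_cast hrab)
    exact ENat.one_le_iff_ne_zero.mpr hpos.ne'
  have hw4 : (4 : ℕ∞) ≤ w := by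
    calc (4 : ℕ∞) ≤ ((r - 1 : ℕ) : ℕ∞) := by exact_mod_cast (by omega : 4 ≤ r - 1)
      _ = ((r - 1 : ℕ) : ℕ∞) * 1 := (mul_one _).symm
      _ ≤ ((r - 1 : ℕ) : ℕ∞) * M := mul_le_mul_right hM1 _
      _ = w := hw.symm
  have hvα : emultiplicity (1 - ζ) (freyAlpha r ζ) = 2 := by
    rw [freyAlpha, emultiplicity_mul hπ, emultiplicity_mul hπ, hvζ, hv1,
      hvk (r - 3) (by omega) (by omega)]
    norm_num
  have hvf1 : emultiplicity (1 - ζ)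
      ((a : 𝓞 K) ^ 2 + (ζ ^ 2 + ζ ^ (r - 2)) * (a : 𝓞 K) * (b : 𝓞 K) + (b : 𝓞 K) ^ 2) = 2 := by
    have key : (a : 𝓞 K) ^ 2 + (ζ ^ 2 + ζ ^ (r - 2)) * (a : 𝓞 K) * (b : 𝓞 K) + (b : 𝓞 K) ^ 2
        = ((a : 𝓞 K) + (b : 𝓞 K)) * ((b : 𝓞 K) - (a : 𝓞 K) + (ζ ^ 2 + ζ ^ (r - 2)) * (a : 𝓞 K))
          + (a : 𝓞 K) ^ 2 * ((1 - ζ ^ 2) * (1 - ζ ^ (r - 2))) := by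
      linear_combination (-(a : 𝓞 K) ^ 2) * hζ2
    have ht1 : emultiplicity (1 - ζ)
        ((a : 𝓞 K) ^ 2 * ((1 - ζ ^ 2) * (1 - ζ ^ (r - 2)))) = 2 := by
      rw [emultiplicity_mul hπ, emultiplicity_mul hπ, emultiplicity_pow hπ, hva,
        hvk 2 (by omega) (by omega), hvk (r - 2) (by omega) (by omega)]
      norm_num
    have hgt : emultiplicity (1 - ζ) ((a : 𝓞 K) ^ 2 * ((1 - ζ ^ 2) * (1 - ζ ^ (r - 2)))) <
        emultiplicity (1 - ζ)
          (((a : 𝓞 K) + (b : 𝓞 K)) *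
            ((b : 𝓞 K) - (a : 𝓞 K) + (ζ ^ 2 + ζ ^ (r - 2)) * (a : 𝓞 K))) := by
      rw [ht1, emultiplicity_mul hπ, ← hwdef]
      calc (2 : ℕ∞) < 4 := by norm_num
        _ ≤ w := hw4
        _ ≤ w + _ := le_self_add
    rw [key, emultiplicity_add_of_gt hgt, ht1]
  have hvf2 : emultiplicity (1 - ζ)
      ((a : 𝓞 K) ^ 2 + (ζ + ζ ^ (r - 1)) * (a : 𝓞 K) * (b : 𝓞 K) + (b : 𝓞 K) ^ 2) = 2 := by
    have key : (a : 𝓞 K) ^ 2 + (ζ + ζ ^ (r - 1)) * (a : 𝓞 K) * (b : 𝓞 K) + (b : 𝓞 K) ^ 2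
        = ((a : 𝓞 K) + (b : 𝓞 K)) * ((b : 𝓞 K) - (a : 𝓞 K) + (ζ + ζ ^ (r - 1)) * (a : 𝓞 K))
          + (a : 𝓞 K) ^ 2 * ((1 - ζ) * (1 - ζ ^ (r - 1))) := by
      linear_combination (-(a : 𝓞 K) ^ 2) * hζ1
    have ht1 : emultiplicity (1 - ζ)
        ((a : 𝓞 K) ^ 2 * ((1 - ζ) * (1 - ζ ^ (r - 1)))) = 2 := by
      rw [emultiplicity_mul hπ, emultiplicity_mul hπ, emultiplicity_pow hπ, hva, hv1,
        hvk (r - 1) (by omega) (by omega)]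
      norm_num
    have hgt : emultiplicity (1 - ζ) ((a : 𝓞 K) ^ 2 * ((1 - ζ) * (1 - ζ ^ (r - 1)))) <
        emultiplicity (1 - ζ)
          (((a : 𝓞 K) + (b : 𝓞 K)) *
            ((b : 𝓞 K) - (a : 𝓞 K) + (ζ + ζ ^ (r - 1)) * (a : 𝓞 K))) := by
      rw [ht1, emultiplicity_mul hπ, ← hwdef]
      calc (2 : ℕ∞) < 4 := by norm_num
        _ ≤ w := hw4
        _ ≤ w + _ := le_self_add
    rw [key, emultiplicity_add_of_gt hgt, ht1]
  have hvA : emultiplicity (1 - ζ) (freyA r ζ a b) = 2 + 2 * w := by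
    rw [freyA, emultiplicity_mul hπ, emultiplicity_pow hπ, hvα, ← hwdef]
    push_cast
    ring
  have hvB : emultiplicity (1 - ζ) (freyB r ζ a b) = 4 := by
    rw [freyB, emultiplicity_mul hπ, freyBeta, emultiplicity_mul hπ, hv1,
      hvk (r - 1) (by omega) (by omega), hvf1]
    norm_num
  have hvC : emultiplicity (1 - ζ) (freyC r ζ a b) = 4 := by
    rw [freyC, emultiplicity_mul hπ, freyGamma, emultiplicity_neg, emultiplicity_mul hπ,
      hvk 2 (by omega) (by omega), hvk (r - 2) (by omega) (by omega), hvf2]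
    norm_num
  have hA10 : (10 : ℕ∞) ≤ emultiplicity (1 - ζ) (freyA r ζ a b) := by
    rw [hvA]
    calc (10 : ℕ∞) = 2 + 2 * 4 := by norm_num
      _ ≤ 2 + 2 * w := add_le_add_right (mul_le_mul_right hw4 2) 2
  have hB2 : emultiplicity (1 - ζ) (freyB r ζ a b ^ 2) = 8 := by
    rw [emultiplicity_pow hπ, hvB]; norm_num
  refine ⟨?_, ?_, ?_⟩
  · -- c4
    rw [freyC4, emultiplicity_mul hπ, emultiplicity_pow hπ, hv2]
    have hAB : emultiplicity (1 - ζ) (freyA r ζ a b + freyB r ζ a b) = 4 := by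
      rw [emultiplicity_add_of_gt (by rw [hvB]; exact lt_of_lt_of_le (by norm_num) hA10), hvB]
    have hkey : freyA r ζ a b ^ 2 + freyA r ζ a b * freyB r ζ a b + freyB r ζ a b ^ 2
        = freyA r ζ a b * (freyA r ζ a b + freyB r ζ a b) + freyB r ζ a b ^ 2 := by ring
    have hgt : emultiplicity (1 - ζ) (freyB r ζ a b ^ 2) <
        emultiplicity (1 - ζ) (freyA r ζ a b * (freyA r ζ a b + freyB r ζ a b)) := by
      rw [hB2, emultiplicity_mul hπ, hAB]
      calc (8 : ℕ∞) < 10 + 4 := by norm_num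
        _ ≤ emultiplicity (1 - ζ) (freyA r ζ a b) + 4 := add_le_add_left hA10 4
    rw [hkey, emultiplicity_add_of_gt hgt, hB2]
    norm_num
  · -- c6
    rw [freyC6, emultiplicity_mul hπ, emultiplicity_pow hπ, hv2]
    have hkey : 2 * freyA r ζ a b ^ 3 + 3 * freyA r ζ a b ^ 2 * freyB r ζ a b -
          3 * freyA r ζ a b * freyB r ζ a b ^ 2 - 2 * freyB r ζ a b ^ 3
        = freyA r ζ a b *
            (2 * freyA r ζ a b ^ 2 + (3 * freyA r ζ a b * freyB r ζ a b +
              -(3 * freyB r ζ a b ^ 2)))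
          + -(2 * freyB r ζ a b ^ 3) := by ring
    have hB3 : emultiplicity (1 - ζ) (-(2 * freyB r ζ a b ^ 3)) = 12 := by
      rw [emultiplicity_neg, emultiplicity_mul hπ, hv2, emultiplicity_pow hπ, hvB]
      norm_num
    have e1 : (8 : ℕ∞) ≤ emultiplicity (1 - ζ) (2 * freyA r ζ a b ^ 2) := by
      calc (8 : ℕ∞) ≤ 2 * 10 := by norm_num
        _ ≤ 2 * emultiplicity (1 - ζ) (freyA r ζ a b) := mul_le_mul_right hA10 2
        _ = emultiplicity (1 - ζ) (freyA r ζ a b ^ 2) := (emultiplicity_pow hπ).symm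
        _ ≤ emultiplicity (1 - ζ) (2 * freyA r ζ a b ^ 2) :=
            emultiplicity_le_emultiplicity_of_dvd_right (dvd_mul_left _ _)
    have e2 : (8 : ℕ∞) ≤ emultiplicity (1 - ζ) (3 * freyA r ζ a b * freyB r ζ a b) := by
      calc (8 : ℕ∞) ≤ 10 + 4 := by norm_num
        _ ≤ emultiplicity (1 - ζ) (freyA r ζ a b) + emultiplicity (1 - ζ) (freyB r ζ a b) :=
            add_le_add hA10 (le_of_eq hvB.symm)
        _ = emultiplicity (1 - ζ) (freyA r ζ a b * freyB r ζ a b) := (emultiplicity_mul hπ).symm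
        _ ≤ emultiplicity (1 - ζ) (3 * freyA r ζ a b * freyB r ζ a b) :=
            emultiplicity_le_emultiplicity_of_dvd_right ⟨3, by ring⟩
    have e3 : (8 : ℕ∞) ≤ emultiplicity (1 - ζ) (-(3 * freyB r ζ a b ^ 2)) := by
      rw [emultiplicity_neg]
      calc (8 : ℕ∞) = emultiplicity (1 - ζ) (freyB r ζ a b ^ 2) := hB2.symm
        _ ≤ emultiplicity (1 - ζ) (3 * freyB r ζ a b ^ 2) :=
            emultiplicity_le_emultiplicity_of_dvd_right (dvd_mul_left _ _)
    have hinner : (8 : ℕ∞) ≤ emultiplicity (1 - ζ)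
        (2 * freyA r ζ a b ^ 2 + (3 * freyA r ζ a b * freyB r ζ a b +
          -(3 * freyB r ζ a b ^ 2))) := by
      refine le_trans ?_ min_le_emultiplicity_add
      refine le_min e1 (le_trans ?_ min_le_emultiplicity_add)
      exact le_min e2 e3
    have hgt : emultiplicity (1 - ζ) (-(2 * freyB r ζ a b ^ 3)) <
        emultiplicity (1 - ζ) (freyA r ζ a b *
          (2 * freyA r ζ a b ^ 2 + (3 * freyA r ζ a b * freyB r ζ a b +
            -(3 * freyB r ζ a b ^ 2)))) := by
      rw [hB3, emultiplicity_mul hπ]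
      calc (12 : ℕ∞) < 10 + 8 := by norm_num
        _ ≤ _ := add_le_add hA10 hinner
    rw [hkey, emultiplicity_add_of_gt hgt, hB3]
    norm_num
  · -- Delta
    rw [freyDelta, emultiplicity_mul hπ, emultiplicity_pow hπ, emultiplicity_pow hπ, hv2,
      emultiplicity_mul hπ, emultiplicity_mul hπ, hvA, hvB, hvC, hw]
    push_cast
    ring
end

section
/- Let r ≥ 5 be a prime, let ζ be a primitive r-th root of unity in ℚ(ζ_r), and let q be any prime ideal of ℤ[ζ] lying above 2, with associated valuation v_q (normalized so v_q(2) = 1). Let a, b be coprime integers with 2 dividing a+b (so a and b are both odd), and let F_{a,b} be the elliptic curve Y² = X(X − A_{a,b})(X + B_{a,b}). Then v_q(c₄(F_{a,b})) = 4, v_q(c₆(F_{a,b})) = 6, and v_q(Δ(F_{a,b})) = 4 + 4·v₂(a+b), where v₂(a+b) is the 2-adic valuation of the integer a+b. -/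
open NumberField

private lemma aux_f1 {R : Type*} [CommRing R] (ζ y A B : R) (h : ζ^2 * y = 1) :
    A^2 + (ζ^2 + y)*A*B + B^2 = (A+B)^2 + y*(ζ^2-1)^2*(A*B) := by
  linear_combination (A*B*(2 - ζ^2)) * h

private lemma aux_f2 {R : Type*} [CommRing R] (ζ x A B : R) (h : ζ * x = 1) :
    A^2 + (ζ + x)*A*B + B^2 = (A+B)^2 + x*(ζ-1)^2*(A*B) := by
  linear_combination (A*B*(2 - ζ)) * h


/-- Let `r ≥ 5` be a prime, `ζ` a primitive `r`-th root of unity in the ring of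
integers `ℤ[ζ]` of `ℚ(ζ_r)`, and `q` a prime ideal of `ℤ[ζ]` above `2`, with
valuation `v_q` normalized by `v_q(2) = 1`. Let `a, b` be coprime integers with
`2 ∣ a+b`. Then `v_q(c₄) = 4`, `v_q(c₆) = 6` and `v_q(Δ) = 4 + 4·v₂(a+b)` for the
Frey curve `Y² = X(X − A_{a,b})(X + B_{a,b})`. -/
theorem stmt_14 (r : ℕ) (hr : r.Prime) (hr5 : 5 ≤ r)
    (K : Type*) [Field K] [CharZero K]
    [IsCyclotomicExtension {r} ℚ K]
    (ζ : 𝓞 K) (hζ : IsPrimitiveRoot ζ r)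
    (q : Ideal (𝓞 K)) (hq : q.IsPrime)
    (hq2 : emultiplicity q (Ideal.span {(2 : 𝓞 K)}) = 1)
    (a b : ℤ) (hab : IsCoprime a b) (h2ab : (2 : ℤ) ∣ a + b) :
    emultiplicity q (Ideal.span {freyC4 r ζ a b}) = 4 ∧
    emultiplicity q (Ideal.span {freyC6 r ζ a b}) = 6 ∧
    emultiplicity q (Ideal.span {freyDelta r ζ a b}) =
      4 + 4 * emultiplicity (2 : ℤ) (a + b) := by
  haveI : NumberField K := IsCyclotomicExtension.numberField {r} ℚ K
  have hζr : ζ ^ r = 1 := hζ.pow_eq_one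
  -- 2 ∈ q, 2 ∉ q²
  have h2q : (2 : 𝓞 K) ∈ q := by
    have h1 : q ^ 1 ∣ Ideal.span {(2 : 𝓞 K)} :=
      pow_dvd_iff_le_emultiplicity.mpr (by rw [hq2]; norm_num)
    rw [pow_one, Ideal.dvd_iff_le, Ideal.span_singleton_le_iff_mem] at h1
    exact h1
  have h2q2 : (2 : 𝓞 K) ∉ q ^ 2 := by
    intro h
    have h1 : ((2:ℕ):ℕ∞) ≤ emultiplicity q (Ideal.span {(2 : 𝓞 K)}) :=
      pow_dvd_iff_le_emultiplicity.mp
        (Ideal.dvd_iff_le.mpr ((Ideal.span_singleton_le_iff_mem _).mpr h))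
    rw [hq2] at h1
    norm_num at h1
  have hq_ne_bot : q ≠ ⊥ := by
    rintro rfl
    rw [Ideal.mem_bot] at h2q
    exact two_ne_zero h2q
  have hqp : Prime q := Ideal.prime_of_isPrime hq_ne_bot hq
  have hone : (1 : 𝓞 K) ∉ q := fun h => hq.ne_top (q.eq_top_iff_one.mpr h)
  -- valuation basics
  have vmul : ∀ x y : 𝓞 K, emultiplicity q (Ideal.span {x * y})
      = emultiplicity q (Ideal.span {x}) + emultiplicity q (Ideal.span {y}) := by
    intro x y
    rw [← Ideal.span_singleton_mul_span_singleton]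
    exact emultiplicity_mul hqp
  have vpow : ∀ (x : 𝓞 K) (n : ℕ), emultiplicity q (Ideal.span {x ^ n})
      = n * emultiplicity q (Ideal.span {x}) := by
    intro x n
    rw [← Ideal.span_singleton_pow]
    exact emultiplicity_pow hqp
  have vzero : ∀ x : 𝓞 K, x ∉ q → emultiplicity q (Ideal.span {x}) = 0 := by
    intro x hx
    rw [emultiplicity_eq_zero, Ideal.dvd_iff_le, Ideal.span_singleton_le_iff_mem]
    exact hx
  -- odd integers are units at q
  have hodd : ∀ m : ℤ, ¬ (2 ∣ m) → ((m : 𝓞 K) ∉ q) := by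
    intro m hm h
    obtain ⟨k, hk⟩ : ∃ k, m = 2*k + 1 := ⟨(m-1)/2, by omega⟩
    apply hone
    have h1 : (1 : 𝓞 K) = (m : 𝓞 K) - 2 * (k : 𝓞 K) := by
      have := congrArg (fun t : ℤ => (t : 𝓞 K)) hk
      push_cast at this
      rw [this]; ring
    rw [h1]
    exact sub_mem h (Ideal.mul_mem_right _ _ h2q)
  -- ζ-power relations
  have hpow : ∀ k, k ≤ r → ζ ^ k * ζ ^ (r - k) = 1 := by
    intro k hk
    rw [← pow_add, Nat.add_sub_cancel' hk, hζr]
  have hζq : ζ ∉ q := by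
    intro h
    apply hone
    have h1 := hpow 1 (by omega)
    rw [pow_one] at h1
    rw [← h1]
    exact Ideal.mul_mem_right _ _ h
  have hζpq : ∀ k : ℕ, ζ ^ k ∉ q := by
    intro k h
    rcases Nat.eq_zero_or_pos k with rfl | hk
    · rw [pow_zero] at h; exact hone h
    · exact hζq (hq.mem_of_pow_mem k h)
  -- 1 - ζ^k is a unit at q
  have hsub : ∀ k, 0 < k → k < r → (1 - ζ ^ k) ∉ q := by
    intro k hk0 hkr h
    have hcop : Nat.Coprime k r :=
      Nat.Coprime.symm (hr.coprime_iff_not_dvd.mpr (fun hd => by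
        have := Nat.le_of_dvd hk0 hd; omega))
    have hprim : IsPrimitiveRoot (ζ ^ k) r := hζ.pow_of_coprime k hcop
    have hgeom : ∑ i ∈ Finset.range r, (ζ ^ k) ^ i = 0 :=
      hprim.geom_sum_eq_zero (by omega)
    have hdvdr : (1 - ζ ^ k) ∣ ((r : ℤ) : 𝓞 K) := by
      have hsum : ((r : ℤ) : 𝓞 K) = ∑ i ∈ Finset.range r, (1 - (ζ ^ k) ^ i) := by
        rw [Finset.sum_sub_distrib, hgeom, sub_zero, Finset.sum_const,
          Finset.card_range]
        push_cast
        ring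
      rw [hsum]
      refine Finset.dvd_sum (fun i _ => ?_)
      simpa using sub_dvd_pow_sub_pow 1 (ζ ^ k) i
    apply hodd (r : ℤ) (fun hd => by
      have : (2:ℕ) ∣ r := by exact_mod_cast hd
      rcases (Nat.Prime.eq_one_or_self_of_dvd hr 2 this) with h' | h' <;> omega)
    obtain ⟨c, hc⟩ := hdvdr
    rw [hc]
    exact Ideal.mul_mem_right _ _ h
  -- a and b are odd
  have ha2 : ¬ (2:ℤ) ∣ a := by
    intro h
    have hb2 : (2:ℤ) ∣ b := (dvd_add_right h).mp h2ab
    have := hab.isUnit_of_dvd' h hb2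
    rw [Int.isUnit_iff] at this
    omega
  have hb2 : ¬ (2:ℤ) ∣ b := by
    intro h
    have ha' : (2:ℤ) ∣ a := (dvd_add_left h).mp h2ab
    exact ha2 ha'
  -- a + b ∈ q
  obtain ⟨c, hc⟩ := h2ab
  have hcast : ((a : 𝓞 K) + b) = 2 * (c : 𝓞 K) := by
    have := congrArg (fun t : ℤ => (t : 𝓞 K)) hc
    push_cast at this
    exact this
  have habq : ((a : 𝓞 K) + b) ∈ q := by
    rw [hcast]; exact Ideal.mul_mem_right _ _ h2q
  have habq2 : ((a : 𝓞 K) + b) ^ 2 ∈ q ^ 2 := Ideal.pow_mem_pow habq 2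
  have habqsq : ((a : 𝓞 K) + b) ^ 2 ∈ q := by
    rw [sq]; exact Ideal.mul_mem_right _ _ habq
  have habmul : (a : 𝓞 K) * b ∉ q := by
    intro h
    rcases hq.mem_or_mem h with h' | h'
    · exact hodd a ha2 h'
    · exact hodd b hb2 h'
  -- the quadratic forms are units at q
  have hf1 : ((a : 𝓞 K) ^ 2 + (ζ ^ 2 + ζ ^ (r - 2)) * a * b + b ^ 2) ∉ q := by
    intro h
    have hrel := hpow 2 (by omega)
    have hid := aux_f1 ζ (ζ ^ (r-2)) (a : 𝓞 K) (b : 𝓞 K) hrel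
    rw [hid] at h
    have hw : ζ ^ (r-2) * (ζ^2 - 1)^2 * ((a : 𝓞 K) * b) ∈ q := by
      have := sub_mem h habqsq
      simpa using this
    rcases hq.mem_or_mem hw with h' | h'
    · rcases hq.mem_or_mem h' with h'' | h''
      · exact hζpq _ h''
      · have h3 : (ζ^2 - 1) ∈ q := hq.mem_of_pow_mem 2 h''
        have h4 : (1 - ζ^2) ∈ q := by
          have := q.neg_mem h3; simpa using this
        exact hsub 2 (by omega) (by omega) h4
    · exact habmul h'
  have hf2 : ((a : 𝓞 K) ^ 2 + (ζ + ζ ^ (r - 1)) * a * b + b ^ 2) ∉ q := by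
    intro h
    have hrel := hpow 1 (by omega)
    rw [pow_one] at hrel
    have hid := aux_f2 ζ (ζ ^ (r-1)) (a : 𝓞 K) (b : 𝓞 K) hrel
    rw [hid] at h
    have hw : ζ ^ (r-1) * (ζ - 1)^2 * ((a : 𝓞 K) * b) ∈ q := by
      have := sub_mem h habqsq
      simpa using this
    rcases hq.mem_or_mem hw with h' | h'
    · rcases hq.mem_or_mem h' with h'' | h''
      · exact hζpq _ h''
      · have h3 : (ζ - 1) ∈ q := hq.mem_of_pow_mem 2 h''
        have h4 : (1 - ζ) ∈ q := by
          have := q.neg_mem h3; simpa using this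
        have h5 : (1 - ζ^1) ∈ q := by rwa [pow_one]
        exact hsub 1 (by omega) (by omega) h5
    · exact habmul h'
  -- α, β, γ are units at q
  have hmulq : ∀ x y : 𝓞 K, x ∉ q → y ∉ q → x * y ∉ q := by
    intro x y hx hy h
    rcases hq.mem_or_mem h with h' | h'
    · exact hx h'
    · exact hy h'
  have hone_sub : (1 - ζ) ∉ q := by
    have := hsub 1 (by omega) (by omega); rwa [pow_one] at this
  have hα : freyAlpha r ζ ∉ q :=
    hmulq _ _ (hmulq _ _ hζq hone_sub) (hsub (r-3) (by omega) (by omega))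
  have hβ : freyBeta r ζ ∉ q :=
    hmulq _ _ hone_sub (hsub (r-1) (by omega) (by omega))
  have hγ : freyGamma r ζ ∉ q := by
    intro h
    have h' : ((1 - ζ ^ 2) * (1 - ζ ^ (r - 2))) ∈ q := by
      have := q.neg_mem h; simpa [freyGamma] using this
    exact hmulq _ _ (hsub 2 (by omega) (by omega)) (hsub (r-2) (by omega) (by omega)) h'
  -- B, C units at q; A ∈ q²
  have hB : freyB r ζ a b ∉ q := hmulq _ _ hβ hf1
  have hC : freyC r ζ a b ∉ q := hmulq _ _ hγ hf2
  have hAq2 : freyA r ζ a b ∈ q ^ 2 := Ideal.mul_mem_left _ _ habq2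
  have hAq : freyA r ζ a b ∈ q := Ideal.mul_mem_left _ _ habqsq
  set A := freyA r ζ a b with hAdef
  set B := freyB r ζ a b with hBdef
  set C := freyC r ζ a b with hCdef
  have vB : emultiplicity q (Ideal.span {B}) = 0 := vzero _ hB
  have vC : emultiplicity q (Ideal.span {C}) = 0 := vzero _ hC
  have v2 : emultiplicity q (Ideal.span {(2 : 𝓞 K)}) = 1 := hq2
  -- v(a+b) = emultiplicity 2 (a+b)
  set N := emultiplicity (2 : ℤ) (a + b) with hNdef
  have vab : emultiplicity q (Ideal.span {((a : 𝓞 K) + b)}) = N := by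
    rcases eq_or_ne (a + b) 0 with h0 | h0
    · have hz : ((a : 𝓞 K) + b) = 0 := by
        have := congrArg (fun t : ℤ => (t : 𝓞 K)) h0
        push_cast at this
        exact this
      rw [hz, hNdef, h0]
      rw [show (Ideal.span {(0 : 𝓞 K)}) = 0 by simp [Ideal.zero_eq_bot]]
      rw [emultiplicity_zero, emultiplicity_zero]
    · have hfin : FiniteMultiplicity (2:ℤ) (a + b) := by
        refine ⟨(a+b).natAbs, fun hd => ?_⟩
        have h1 : (2:ℕ) ^ ((a+b).natAbs + 1) ∣ (a+b).natAbs := by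
          have := Int.natAbs_dvd_natAbs.mpr hd
          simpa [Int.natAbs_pow] using this
        have h2 := Nat.le_of_dvd (Int.natAbs_pos.mpr h0) h1
        have h3 := Nat.lt_two_pow_self (n := (a+b).natAbs)
        have h4 : (2:ℕ) ^ ((a+b).natAbs) ≤ 2 ^ ((a+b).natAbs + 1) :=
          Nat.pow_le_pow_right (by norm_num) (by omega)
        omega
      set n := multiplicity (2:ℤ) (a+b) with hn
      have hE : emultiplicity (2:ℤ) (a+b) = (n : ℕ∞) :=
        hfin.emultiplicity_eq_multiplicity
      obtain ⟨hdvd, hndvd⟩ := emultiplicity_eq_coe.mp hE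
      obtain ⟨m, hm⟩ := hdvd
      have hmodd : ¬ (2:ℤ) ∣ m := by
        intro ⟨u, hu⟩
        exact hndvd ⟨u, by rw [hm, hu]; ring⟩
      have hcast2 : ((a : 𝓞 K) + b) = 2 ^ n * (m : 𝓞 K) := by
        have := congrArg (fun t : ℤ => (t : 𝓞 K)) hm
        push_cast at this
        exact this
      rw [hcast2, vmul, vpow, v2, vzero _ (hodd m hmodd), hNdef, hE]
      simp
  have vA : emultiplicity q (Ideal.span {A}) = 2 * N := by
    rw [hAdef, freyA, vmul, vpow, vab, vzero _ hα]
    simp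
  refine ⟨?_, ?_, ?_⟩
  · -- c₄
    have hS : (A ^ 2 + A * B + B ^ 2) ∉ q := by
      intro h
      have hBB : B ^ 2 ∈ q := by
        have h1 : B ^ 2 = (A ^ 2 + A * B + B ^ 2) - A * (A + B) := by ring
        rw [h1]
        exact sub_mem h (Ideal.mul_mem_right _ _ hAq)
      exact hB (hq.mem_of_pow_mem 2 hBB)
    rw [freyC4, vmul, vpow, v2, vzero _ hS]
    norm_num
  · -- c₆
    have hT1 : (2 * A ^ 3 + 3 * A ^ 2 * B - 3 * A * B ^ 2 - 2 * B ^ 3) ∈ q := by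
      have h1 : 2 * A ^ 3 + 3 * A ^ 2 * B - 3 * A * B ^ 2 - 2 * B ^ 3
          = A * (2 * A ^ 2 + 3 * A * B - 3 * B ^ 2) - 2 * B ^ 3 := by ring
      rw [h1]
      exact sub_mem (Ideal.mul_mem_right _ _ hAq) (Ideal.mul_mem_right _ _ h2q)
    have hT2 : (2 * A ^ 3 + 3 * A ^ 2 * B - 3 * A * B ^ 2 - 2 * B ^ 3) ∉ q ^ 2 := by
      intro h
      have h2B : (2 : 𝓞 K) * B ^ 3 ∈ q ^ 2 := by
        have h1 : (2 : 𝓞 K) * B ^ 3 = A * (2 * A ^ 2 + 3 * A * B - 3 * B ^ 2)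
            - (2 * A ^ 3 + 3 * A ^ 2 * B - 3 * A * B ^ 2 - 2 * B ^ 3) := by ring
        rw [h1]
        exact sub_mem (Ideal.mul_mem_right _ _ hAq2) h
      have hle : ((2:ℕ):ℕ∞) ≤ emultiplicity q (Ideal.span {(2 : 𝓞 K) * B ^ 3}) :=
        pow_dvd_iff_le_emultiplicity.mp
          (Ideal.dvd_iff_le.mpr ((Ideal.span_singleton_le_iff_mem _).mpr h2B))
      rw [vmul, vpow, v2, vB] at hle
      norm_num at hle
    have hvT : emultiplicity q
        (Ideal.span {2 * A ^ 3 + 3 * A ^ 2 * B - 3 * A * B ^ 2 - 2 * B ^ 3}) = 1 := by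
      rw [show ((1:ℕ∞)) = ((1:ℕ):ℕ∞) by norm_num, emultiplicity_eq_coe]
      constructor
      · rw [pow_one, Ideal.dvd_iff_le, Ideal.span_singleton_le_iff_mem]
        exact hT1
      · rw [Ideal.dvd_iff_le]
        intro hle
        exact hT2 ((Ideal.span_singleton_le_iff_mem _).mp hle)
    rw [freyC6, vmul, vpow, v2, hvT]
    norm_num
  · -- Δ
    rw [freyDelta, vmul, vpow, vpow, v2, vmul, vmul, vA, vB, vC, hNdef]
    rw [add_zero, add_zero, ← mul_assoc]
    norm_num
end

section
/- Let n₁, …, n_k be finitely many negative integers. Then there exist infinitely many primes p such that none of n₁, …, n_k is a square modulo p; in fact one may take the primes p ≡ 7 (mod 8) satisfying (q/p) = 1 for every odd prime q dividing the product n₁⋯n_k. -/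
-- product of squares lemma
lemma aux_sq (p : ℕ) : ∀ m : ℕ, m ≠ 0 →
    (∀ r : ℕ, r.Prime → r ∣ m → IsSquare ((r : ℕ) : ZMod p)) → IsSquare ((m : ℕ) : ZMod p) := by
  intro m
  induction m using Nat.strong_induction_on with
  | _ m ih =>
    intro hm hr
    rcases eq_or_ne m 1 with rfl | h1
    · simpa using isSquare_one
    · have hfac : m.minFac.Prime := Nat.minFac_prime h1
      have hdvd : m.minFac ∣ m := Nat.minFac_dvd m
      have h2 : m = m.minFac * (m / m.minFac) := (Nat.mul_div_cancel' hdvd).symm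
      have hlt : m / m.minFac < m := Nat.div_lt_self (Nat.pos_of_ne_zero hm) hfac.one_lt
      have hne : m / m.minFac ≠ 0 := by
        intro h0; rw [h0, Nat.mul_zero] at h2; exact hm h2
      have ihs := ih _ hlt hne (fun r hr' hd => hr r hr' (hd.trans (Nat.div_dvd_of_dvd hdvd)))
      have := (hr _ hfac hdvd).mul ihs
      rw [← Nat.cast_mul, ← h2] at this
      exact this

lemma aux_sub (k : ℕ) (n : Fin k → ℤ) (hn : ∀ i, n i < 0) :
    {p : ℕ | p.Prime ∧ p % 8 = 7 ∧
        ∀ q : ℕ, q.Prime → Odd q → (q : ℤ) ∣ (∏ i, n i) →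
          (q : ZMod p) ≠ 0 ∧ IsSquare ((q : ℕ) : ZMod p)} ⊆
      {p : ℕ | p.Prime ∧ ∀ i, ¬ IsSquare ((n i : ZMod p))} := by
  rintro p ⟨hp, h8, hq⟩
  haveI : Fact p.Prime := ⟨hp⟩
  have hp2 : p ≠ 2 := by omega
  have hoddp : Odd p := Nat.Prime.odd_of_ne_two hp hp2
  refine ⟨hp, fun i hsq => ?_⟩
  -- p does not divide the product
  have hpprod : ¬ (p : ℤ) ∣ (∏ i, n i) := fun hd =>
    (hq p hp hoddp hd).1 (by simp [ZMod.natCast_self])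
  have hdvdi : n i ∣ ∏ j, n j := Finset.dvd_prod_of_mem n (Finset.mem_univ i)
  set m : ℕ := (n i).natAbs with hm
  have hmne : m ≠ 0 := by
    simp only [hm, Int.natAbs_ne_zero]; exact (hn i).ne
  have hmn : (n i : ZMod p) = -((m : ℕ) : ZMod p) := by
    have h' : ((n i).natAbs : ℤ) = -(n i) := by have := hn i; omega
    have : n i = -(m : ℤ) := by rw [hm]; omega
    rw [this]; push_cast; ring
  -- m is a square mod p
  have hmsq : IsSquare ((m : ℕ) : ZMod p) := by
    apply aux_sq p m hmne
    intro r hr hrd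
    rcases eq_or_ne r 2 with rfl | hr2
    · exact (ZMod.exists_sq_eq_two_iff hp2).mpr (Or.inr h8)
    · have hrodd : Odd r := hr.odd_of_ne_two hr2
      have : (r : ℤ) ∣ ∏ j, n j := dvd_trans (Int.natCast_dvd_natCast.mpr hrd |>.trans
        (Int.natAbs_dvd.mpr dvd_rfl)) hdvdi
      exact (hq r hr hrodd this).2
  -- m is nonzero mod p
  have hmne0 : ((m : ℕ) : ZMod p) ≠ 0 := by
    intro hd0
    rw [ZMod.natCast_eq_zero_iff] at hd0
    have hd := hd0
    exact hpprod (dvd_trans ((Int.natCast_dvd_natCast.mpr hd).trans (Int.natAbs_dvd.mpr dvd_rfl)) hdvdi)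
  -- derive -1 is a square
  have hneg1 : IsSquare (-1 : ZMod p) := by
    rw [hmn] at hsq
    obtain ⟨c, hc⟩ := hmsq
    have hcne : c ≠ 0 := by rintro rfl; simp at hc; exact hmne0 hc
    have hinv : IsSquare (((m : ℕ) : ZMod p))⁻¹ := ⟨c⁻¹, by rw [hc, mul_inv]⟩
    have := hsq.mul hinv
    rwa [neg_mul, mul_inv_cancel₀ hmne0] at this
  rw [ZMod.exists_sq_eq_neg_one_iff] at hneg1
  omega

lemma aux_inf (k : ℕ) (n : Fin k → ℤ) (hn : ∀ i, n i < 0) :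
    {p : ℕ | p.Prime ∧ p % 8 = 7 ∧
        ∀ q : ℕ, q.Prime → Odd q → (q : ℤ) ∣ (∏ i, n i) →
          (q : ZMod p) ≠ 0 ∧ IsSquare ((q : ℕ) : ZMod p)}.Infinite := by
  set N : ℕ := (∏ i, n i).natAbs with hNdef
  have hprodne : (∏ i, n i) ≠ 0 := Finset.prod_ne_zero_iff.mpr (fun i _ => (hn i).ne)
  have hN : N ≠ 0 := by simpa [hNdef, Int.natAbs_ne_zero] using hprodne
  haveI : NeZero (8 * N) := ⟨by positivity⟩
  have hdir : {p : ℕ | p.Prime ∧ (p : ZMod (8 * N)) = -1}.Infinite :=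
    Nat.infinite_setOfPred_prime_and_eq_mod isUnit_one.neg
  apply hdir.mono
  rintro p ⟨hp, hpm⟩
  haveI : Fact p.Prime := ⟨hp⟩
  -- 8*N divides p+1
  have hdvd : 8 * N ∣ p + 1 := by
    rw [← ZMod.natCast_eq_zero_iff]
    push_cast [hpm]; ring
  have h8 : p % 8 = 7 := by
    have h8' : 8 ∣ p + 1 := dvd_trans ⟨N, rfl⟩ hdvd
    have := hp.two_le
    omega
  refine ⟨hp, h8, fun q hq hqodd hqd => ?_⟩
  haveI : Fact q.Prime := ⟨hq⟩
  have hqN : q ∣ N := by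
    have := Int.natAbs_dvd_natAbs.mpr hqd
    simpa [hNdef] using this
  have hqp1 : q ∣ p + 1 := dvd_trans (Dvd.dvd.mul_left hqN 8) hdvd
  have hpq : p ≠ q := by
    rintro rfl
    have : p ∣ 1 := (Nat.dvd_add_right dvd_rfl).mp hqp1
    exact hp.one_lt.ne' (Nat.dvd_one.mp this)
  constructor
  · intro h0
    rw [ZMod.natCast_eq_zero_iff] at h0
    exact hpq ((Nat.prime_dvd_prime_iff_eq hp hq).mp h0)
  · -- (p : ZMod q) = -1
    have hpq1 : ((p : ZMod q)) = -1 := by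
      have : ((p + 1 : ℕ) : ZMod q) = 0 := by
        rw [ZMod.natCast_eq_zero_iff]; exact hqp1
      push_cast at this
      linear_combination this
    have hp4 : p % 4 = 3 := by omega
    have hq2 : q ≠ 2 := by rintro rfl; exact (Nat.not_odd_iff_even.mpr (by decide)) hqodd
    have hq4 : q % 4 = 1 ∨ q % 4 = 3 := by
      have := Nat.odd_iff.mp hqodd
      omega
    rcases hq4 with hq4 | hq4
    · rw [← ZMod.exists_sq_eq_prime_iff_of_mod_four_eq_one hq4 (by omega : p ≠ 2)]
      rw [hpq1]
      exact (ZMod.exists_sq_eq_neg_one_iff).mpr (by omega)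
    · rw [ZMod.exists_sq_eq_prime_iff_of_mod_four_eq_three hp4 hq4 hpq, hpq1,
        ZMod.exists_sq_eq_neg_one_iff]
      omega


/-- Let `n₁, …, n_k` be finitely many negative integers. Then there exist infinitely
many primes `p` such that none of the `nᵢ` is a square modulo `p`; in fact one may take
the primes `p ≡ 7 (mod 8)` such that `(q/p) = 1` for every odd prime `q` dividing
`n₁ ⋯ n_k`. -/
theorem stmt_17 (k : ℕ) (n : Fin k → ℤ) (hn : ∀ i, n i < 0) :
    {p : ℕ | p.Prime ∧ p % 8 = 7 ∧
        ∀ q : ℕ, q.Prime → Odd q → (q : ℤ) ∣ (∏ i, n i) →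
          (q : ZMod p) ≠ 0 ∧ IsSquare ((q : ℕ) : ZMod p)}.Infinite ∧
    {p : ℕ | p.Prime ∧ p % 8 = 7 ∧
        ∀ q : ℕ, q.Prime → Odd q → (q : ℤ) ∣ (∏ i, n i) →
          (q : ZMod p) ≠ 0 ∧ IsSquare ((q : ℕ) : ZMod p)} ⊆
      {p : ℕ | p.Prime ∧ ∀ i, ¬ IsSquare ((n i : ZMod p))} := by
  exact ⟨aux_inf k n hn, aux_sub k n hn⟩
end
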